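/- arXiv:1804.03203 — 3 statements merged into one kernel-verified Lean document; each statement's English description precedes it below -/
import Mathlib

section
/- Let A be a C*-algebra, H a complex Hilbert space, π : A → B(H) a ⋆-algebra homomorphism, ρ : A → A and ρ_n : A → A (n ∈ ℕ) ⋆-algebra endomorphisms, and for each n let U_n ∈ B(H) be a unitary with U_n·π(ρ(a)) = π(ρ_n(a))·U_n for all a ∈ A. Suppose there is a dense subset D ⊆ A such that ‖ρ_n(a) − a‖ → 0 as n → ∞ for every a ∈ D. Then for every a ∈ A, π(ρ(a)) = lim_{n→∞} U_n* π(a) U_n in operator norm; that is, ρ is asymptotically inner in B(H). -/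
/-- **Lemma 3.2** (almost localized and transportable endomorphisms are asymptotically
inner). Suppose `ρ` and the `ρₙ` are ⋆-endomorphisms of a C*-algebra `A`, `π` is a
representation on a Hilbert space `H`, and for each `n` a unitary `Uₙ ∈ B(H)`
intertwines `π∘ρ` and `π∘ρₙ`. If `‖ρₙ(a) − a‖ → 0` for all `a` in a dense subset of
`A`, then `π(ρ(a)) = limₙ Uₙ* π(a) Uₙ` in norm, for every `a ∈ A`. -/
theorem asymptotically_inner
    {A : Type*} [NormedRing A] [StarRing A] [CStarRing A]
    [NormedAlgebra ℂ A] [StarModule ℂ A] [CompleteSpace A]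
    {H : Type*} [NormedAddCommGroup H] [InnerProductSpace ℂ H] [CompleteSpace H]
    (π : A →⋆ₐ[ℂ] (H →L[ℂ] H)) (ρ : A →⋆ₐ[ℂ] A) (ρn : ℕ → (A →⋆ₐ[ℂ] A))
    (U : ℕ → unitary (H →L[ℂ] H))
    (hU : ∀ (n : ℕ) (a : A),
      (U n : H →L[ℂ] H) * π (ρ a) = π (ρn n a) * (U n : H →L[ℂ] H))
    (D : Set A) (hD : Dense D)
    (hconv : ∀ a ∈ D,
      Filter.Tendsto (fun n => ‖ρn n a - a‖) Filter.atTop (nhds 0)) :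
    ∀ a : A,
      Filter.Tendsto
        (fun n => star (U n : H →L[ℂ] H) * π a * (U n : H →L[ℂ] H))
        Filter.atTop (nhds (π (ρ a))) := by
  letI : CStarAlgebra A := { }
  have hπ : ∀ x : A, ‖π x‖ ≤ ‖x‖ := fun x => NonUnitalStarAlgHom.norm_apply_le π x
  have hρ : ∀ x : A, ‖ρ x‖ ≤ ‖x‖ := fun x => NonUnitalStarAlgHom.norm_apply_le ρ x
  intro a
  rw [Metric.tendsto_atTop]
  intro ε hε
  -- pick an approximant from the dense set
  obtain ⟨b, hb1, hbD⟩ := Metric.dense_iff.mp hD a (ε / 3) (by linarith)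
  have hab : dist a b < ε / 3 := by
    simpa [Metric.mem_ball, dist_comm] using hb1
  rw [dist_eq_norm] at hab
  obtain ⟨N, hN⟩ := (Metric.tendsto_atTop.mp (hconv b hbD)) (ε / 3) (by linarith)
  refine ⟨N, fun n hn => ?_⟩
  set u : H →L[ℂ] H := (U n : H →L[ℂ] H) with hu_def
  have hu : star u * u = 1 := by simp [hu_def]
  have hu1 : ‖u‖ ≤ 1 := by
    have h1 : ‖u‖ * ‖u‖ = ‖(1 : H →L[ℂ] H)‖ := by
      rw [← CStarRing.norm_star_mul_self, hu]
    have h2 : ‖(1 : H →L[ℂ] H)‖ ≤ 1 := ContinuousLinearMap.norm_id_le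
    nlinarith [norm_nonneg u]
  have hconj : ∀ x : H →L[ℂ] H, ‖star u * x * u‖ ≤ ‖x‖ := by
    intro x
    calc ‖star u * x * u‖ ≤ ‖star u * x‖ * ‖u‖ := norm_mul_le _ _
      _ ≤ ‖star u‖ * ‖x‖ * ‖u‖ :=
          mul_le_mul_of_nonneg_right (norm_mul_le _ _) (norm_nonneg _)
      _ ≤ 1 * ‖x‖ * 1 := by
          have h' : ‖star u‖ ≤ 1 := by rwa [norm_star]
          gcongr
      _ = ‖x‖ := by ring
  have h3 : star u * π (ρn n b) * u = π (ρ b) := by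
    rw [mul_assoc, ← hU n b, ← mul_assoc, hu, one_mul]
  have e1 : star u * π a * u - π (ρ a)
      = star u * π (a - b) * u + star u * π (b - ρn n b) * u + π (ρ (b - a)) := by
    simp only [map_sub, sub_mul, mul_sub]
    rw [h3]
    abel
  have hNn : ‖ρn n b - b‖ < ε / 3 := by
    have := hN n hn
    rwa [Real.dist_eq, sub_zero, abs_of_nonneg (norm_nonneg _)] at this
  rw [dist_eq_norm, e1]
  calc ‖star u * π (a - b) * u + star u * π (b - ρn n b) * u + π (ρ (b - a))‖
      ≤ ‖star u * π (a - b) * u‖ + ‖star u * π (b - ρn n b) * u‖ + ‖π (ρ (b - a))‖ :=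
        norm_add₃_le
    _ ≤ ‖a - b‖ + ‖ρn n b - b‖ + ‖b - a‖ := by
        gcongr
        · exact (hconj _).trans (hπ _)
        · refine (hconj _).trans ((hπ _).trans ?_)
          rw [norm_sub_rev]
        · exact (hπ _).trans ((hρ _).trans le_rfl)
    _ < ε / 3 + ε / 3 + ε / 3 := by
        have h' := norm_sub_rev b a
        linarith
    _ = ε := by ring
end

section
/- Let ν ≥ 1, let a ∈ ℝ^ν be a unit vector, let 0 < α < π/2, and let C = {x ∈ ℝ^ν : ⟨x, a⟩ ≥ ‖x‖·cos α} be the closed convex cone of half-angle α about a with apex 0. Let y ∈ ℝ^ν with y ≠ 0 and let φ ∈ [0, π] be the angle between y and a (so cos φ = ⟨y, a⟩/‖y‖). If α < φ ≤ π/2 + α, then the Euclidean distance from y to C equals ‖y‖·sin(φ − α). -/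
open scoped RealInnerProductSpace
open Real

private lemma key_scalar_ineq (cα sα t v X : ℝ) (hcα : 0 < cα) (hsα : 0 < sα)
    (hid : Real.sin 0 = 0) (hid2 : sα^2 + cα^2 = 1)
    (hb : t^2 + v^2 ≤ X^2) (hX : 0 ≤ X) (hxt : X * cα ≤ t) :
    cα * v ≤ sα * t := by
  have ht0 : 0 ≤ t := le_trans (by positivity) hxt
  rcases le_or_gt v 0 with hv0 | hv0
  · have : cα * v ≤ 0 := mul_nonpos_of_nonneg_of_nonpos hcα.le hv0
    have : 0 ≤ sα * t := mul_nonneg hsα.le ht0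
    linarith
  · have hXt : (X * cα)^2 ≤ t^2 := by
      have := mul_le_mul hxt hxt (by positivity) ht0
      nlinarith
    have hsq : (cα * v)^2 ≤ (sα * t)^2 := by nlinarith [sq_nonneg v, sq_nonneg t]
    nlinarith [mul_pos hcα hv0, mul_nonneg hsα.le ht0, hsq]

/-- **Distance formula in the proof of Lemma A.1.** Let `C` be the closed convex cone
of half-angle `α` about the unit vector `a` (apex at the origin), let `y ≠ 0`, and
let `φ ∈ [0, π]` be the angle between `y` and `a`. If `α < φ ≤ π/2 + α`, then the
Euclidean distance from `y` to `C` equals `‖y‖·sin(φ − α)`. -/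
theorem dist_to_convex_cone
    {ν : ℕ} (hν : 1 ≤ ν)
    (a : EuclideanSpace ℝ (Fin ν)) (ha : ‖a‖ = 1)
    (α : ℝ) (hα : 0 < α) (hα' : α < π / 2)
    (y : EuclideanSpace ℝ (Fin ν)) (hy : y ≠ 0)
    (φ : ℝ) (hφ0 : 0 ≤ φ) (hφπ : φ ≤ π)
    (hcos : Real.cos φ = ⟪y, a⟫ / ‖y‖)
    (h1 : α < φ) (h2 : φ ≤ π / 2 + α) :
    Metric.infDist y {x : EuclideanSpace ℝ (Fin ν) | ‖x‖ * Real.cos α ≤ ⟪x, a⟫}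
      = ‖y‖ * Real.sin (φ - α) := by
  have hπ := Real.pi_pos
  set r := ‖y‖ with hr
  have hrpos : 0 < r := norm_pos_iff.mpr hy
  have hya : ⟪y, a⟫ = r * Real.cos φ := by
    rw [hcos]; field_simp
  have hsφ : 0 < Real.sin φ := by
    apply Real.sin_pos_of_pos_of_lt_pi (lt_trans hα h1)
    linarith
  have hcα : 0 < Real.cos α := Real.cos_pos_of_mem_Ioo ⟨by linarith, hα'⟩
  have hsα : 0 < Real.sin α := Real.sin_pos_of_pos_of_lt_pi hα (by linarith)
  have hs : 0 ≤ Real.sin (φ - α) := by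
    apply Real.sin_nonneg_of_nonneg_of_le_pi <;> linarith
  have hc : 0 ≤ Real.cos (φ - α) := by
    apply Real.cos_nonneg_of_mem_Icc; constructor <;> linarith
  -- orthogonal component
  set w : EuclideanSpace ℝ (Fin ν) := y - ⟪y, a⟫ • a with hw
  have haa : ⟪a, a⟫ = (1:ℝ) := by
    rw [real_inner_self_eq_norm_sq, ha]; norm_num
  have hwa : ⟪w, a⟫ = 0 := by
    rw [hw, inner_sub_left, real_inner_smul_left, haa]; ring
  have hyw : ⟪y, w⟫ = r^2 * (Real.sin φ)^2 := by
    have hyy : ⟪y, y⟫ = r^2 := by rw [real_inner_self_eq_norm_sq]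
    have hsc := Real.sin_sq_add_cos_sq φ
    rw [hw, inner_sub_right, real_inner_smul_right, hyy, hya]
    nlinarith
  have hwn : ‖w‖ = r * Real.sin φ := by
    have h2 : ‖w‖^2 = (r * Real.sin φ)^2 := by
      rw [← real_inner_self_eq_norm_sq]
      have hww : ⟪w, w⟫ = ⟪y, w⟫ - ⟪y,a⟫ * ⟪a, w⟫ := by
        nth_rewrite 1 [hw]
        rw [inner_sub_left, real_inner_smul_left]
      rw [hww, real_inner_comm w a, hwa, hyw]; ring
    have h3 : 0 ≤ r * Real.sin φ := by positivity
    have := (sq_eq_sq_iff_abs_eq_abs ‖w‖ (r * Real.sin φ)).mp h2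
    rwa [abs_of_nonneg (norm_nonneg w), abs_of_nonneg h3] at this
  have hwn0 : ‖w‖ ≠ 0 := by rw [hwn]; positivity
  -- unit vector u orthogonal to a
  set u : EuclideanSpace ℝ (Fin ν) := ‖w‖⁻¹ • w with hu
  have hua : ⟪u, a⟫ = 0 := by
    rw [hu, real_inner_smul_left, hwa]; ring
  have hau : ⟪a, u⟫ = 0 := by rw [real_inner_comm]; exact hua
  have hww' : ⟪w, w⟫ = ‖w‖^2 := real_inner_self_eq_norm_sq w
  have huu : ⟪u, u⟫ = 1 := by
    rw [hu, real_inner_smul_left, real_inner_smul_right, hww']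
    field_simp
  have hyu : ⟪y, u⟫ = r * Real.sin φ := by
    rw [hu, real_inner_smul_right, hyw, hwn]
    field_simp
  -- y as a combination of a and u
  have hydec : y = (r * Real.cos φ) • a + (r * Real.sin φ) • u := by
    have : (r * Real.sin φ) • u = w := by
      rw [hu, smul_smul, hwn]
      rw [mul_inv_cancel₀ (by rw [← hwn]; exact hwn0), one_smul]
    rw [this, ← hya, hw]
    abel
  -- inner products of combinations
  have hinner : ∀ p q p' q' : ℝ,
      ⟪p • a + q • u, p' • a + q' • u⟫ = p * p' + q * q' := by
    intro p q p' q'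
    simp only [inner_add_left, inner_add_right, real_inner_smul_left,
      real_inner_smul_right, haa, huu, hau, hua]
    ring
  have hnorm : ∀ p q : ℝ, ‖p • a + q • u‖^2 = p^2 + q^2 := by
    intro p q
    rw [← real_inner_self_eq_norm_sq, hinner]; ring
  -- the nearest point
  set c := Real.cos (φ - α) with hcdef
  set s := Real.sin (φ - α) with hsdef
  set x₀ : EuclideanSpace ℝ (Fin ν) :=
    (r * c * Real.cos α) • a + (r * c * Real.sin α) • u with hx0
  have hx0norm : ‖x₀‖ = r * c := by
    have h4 : ‖x₀‖^2 = (r*c)^2 := by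
      rw [hx0, hnorm]
      linear_combination (r*c)^2 * Real.sin_sq_add_cos_sq α
    have h5 : 0 ≤ r * c := by positivity
    have := (sq_eq_sq_iff_abs_eq_abs ‖x₀‖ (r*c)).mp h4
    rwa [abs_of_nonneg (norm_nonneg x₀), abs_of_nonneg h5] at this
  have hx0a : ⟪x₀, a⟫ = r * c * Real.cos α := by
    have : (⟪x₀, a⟫ : ℝ) = ⟪x₀, (1:ℝ) • a + (0:ℝ) • u⟫ := by
      norm_num
    rw [this, hx0, hinner]; ring
  have hx0mem : x₀ ∈ {x : EuclideanSpace ℝ (Fin ν) | ‖x‖ * Real.cos α ≤ ⟪x, a⟫} := by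
    rw [Set.mem_setOf_eq, hx0norm, hx0a]
  have hdist : dist y x₀ = r * s := by
    have hdiff : y - x₀ = (-(r*s*Real.sin α)) • a + (r*s*Real.cos α) • u := by
      have e1 : r*Real.cos φ - r*c*Real.cos α = -(r*s*Real.sin α) := by
        rw [hsdef, hcdef, Real.sin_sub, Real.cos_sub]
        linear_combination (-(r*Real.cos φ)) * Real.sin_sq_add_cos_sq α
      have e2 : r*Real.sin φ - r*c*Real.sin α = r*s*Real.cos α := by
        rw [hsdef, hcdef, Real.sin_sub, Real.cos_sub]
        linear_combination (-(r*Real.sin φ)) * Real.sin_sq_add_cos_sq α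
      rw [← e1, ← e2, sub_smul, sub_smul, hx0]
      nth_rewrite 1 [hydec]
      abel
    rw [dist_eq_norm]
    have h4 : ‖y - x₀‖^2 = (r*s)^2 := by
      rw [hdiff, hnorm]
      linear_combination (r*s)^2 * Real.sin_sq_add_cos_sq α
    have h5 : 0 ≤ r * s := by positivity
    have := (sq_eq_sq_iff_abs_eq_abs ‖y - x₀‖ (r*s)).mp h4
    rwa [abs_of_nonneg (norm_nonneg _), abs_of_nonneg h5] at this
  -- lower bound via supporting hyperplane with normal n
  set n : EuclideanSpace ℝ (Fin ν) := (-Real.sin α) • a + Real.cos α • u with hn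
  have hnn : ‖n‖ = 1 := by
    have h4 : ‖n‖^2 = 1 := by
      rw [hn, hnorm]
      linear_combination Real.sin_sq_add_cos_sq α
    have h5 : ‖n‖^2 = (1:ℝ)^2 := by rw [h4]; norm_num
    have := (sq_eq_sq_iff_abs_eq_abs ‖n‖ 1).mp h5
    rwa [abs_of_nonneg (norm_nonneg n), abs_one] at this
  have hyn : ⟪y, n⟫ = r * s := by
    nth_rewrite 1 [hydec]
    rw [hn, hinner, hsdef, Real.sin_sub]
    ring
  have hlow : ∀ x ∈ {x : EuclideanSpace ℝ (Fin ν) | ‖x‖ * Real.cos α ≤ ⟪x, a⟫},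
      r * s ≤ dist y x := by
    intro x hx
    rw [Set.mem_setOf_eq] at hx
    set t := (⟪x, a⟫ : ℝ) with ht
    set v := (⟪x, u⟫ : ℝ) with hv
    clear_value t v
    have hbessel : t^2 + v^2 ≤ ‖x‖^2 := by
      have h0 : (0:ℝ) ≤ ‖x - (t • a + v • u)‖^2 := sq_nonneg _
      rw [norm_sub_sq_real, inner_add_right, real_inner_smul_right,
        real_inner_smul_right, hnorm] at h0
      rw [← ht, ← hv] at h0
      linarith
    have hkey : Real.cos α * v ≤ Real.sin α * t :=
      key_scalar_ineq _ _ t v ‖x‖ hcα hsα Real.sin_zero (Real.sin_sq_add_cos_sq α)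
        hbessel (norm_nonneg x) hx
    have hxn : ⟪x, n⟫ ≤ 0 := by
      rw [hn, inner_add_right, real_inner_smul_right, real_inner_smul_right,
        ← ht, ← hv]
      linarith [hkey]
    have hcs : ⟪y - x, n⟫ ≤ ‖y - x‖ * ‖n‖ := real_inner_le_norm _ _
    rw [hnn, mul_one, inner_sub_left, hyn] at hcs
    rw [dist_eq_norm]
    linarith
  -- conclude
  have hne : Set.Nonempty {x : EuclideanSpace ℝ (Fin ν) | ‖x‖ * Real.cos α ≤ ⟪x, a⟫} :=
    ⟨x₀, hx0mem⟩
  apply le_antisymm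
  · calc Metric.infDist y _ ≤ dist y x₀ := Metric.infDist_le_dist_of_mem hx0mem
      _ = r * s := hdist
  · by_contra hlt
    push_neg at hlt
    obtain ⟨x, hxmem, hxd⟩ := (Metric.infDist_lt_iff hne).mp hlt
    exact absurd hxd (not_lt.mpr (hlow x hxmem))
end

section
/- Let ν ≥ 1, let F : [0,∞) → [0,∞) be non-increasing, let g : [0,∞) → [0,∞) be non-decreasing and subadditive (g(x + y) ≤ g(x) + g(y) for all x, y ≥ 0), and let b > 0. Define F_{bg}(r) = e^{−b g(r)}·F(r). Then: (i) F_{bg} is non-increasing; (ii) Σ_{y∈ℤ^ν} F_{bg}(‖x − y‖) ≤ Σ_{y∈ℤ^ν} F(‖x − y‖) for every x ∈ ℤ^ν, so ‖F_{bg}‖₀ ≤ ‖F‖₀; (iii) if C ≥ 0 satisfies Σ_{z∈ℤ^ν} F(‖x−z‖)·F(‖z−y‖) ≤ C·F(‖x−y‖) for all x, y ∈ ℤ^ν, then Σ_{z∈ℤ^ν} F_{bg}(‖x−z‖)·F_{bg}(‖z−y‖) ≤ C·F_{bg}(‖x−y‖) for all x, y ∈ ℤ^ν. In particular, if F is an F-function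 on ℤ^ν then F_{bg} is again an F-function on ℤ^ν. -/
noncomputable section

/-- The embedding of the lattice `ℤ^ν` into Euclidean space `ℝ^ν`. -/
def latticeEmbed (ν : ℕ) (x : Fin ν → ℤ) : EuclideanSpace ℝ (Fin ν) :=
  WithLp.toLp 2 (fun i => (x i : ℝ))

/-- If `F` is an `F`-function on `ℤ^ν`, `g : [0,∞) → [0,∞)` is non-decreasing and
subadditive and `b > 0`, then `F_{bg}(r) = e^{−b g(r)}·F(r)` is again an `F`-function:
(i) it is non-increasing, (ii) its lattice sums are dominated by those of `F`
(so `‖F_{bg}‖₀ ≤ ‖F‖₀`), and (iii) any convolution constant `C` for `F` is also a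
convolution constant for `F_{bg}`. -/
theorem weighted_F_function
    (ν : ℕ) (hν : 1 ≤ ν)
    (F : ℝ → ℝ) (hF_nonneg : ∀ r, 0 ≤ r → 0 ≤ F r) (hF_anti : AntitoneOn F (Set.Ici 0))
    (g : ℝ → ℝ) (hg_nonneg : ∀ r, 0 ≤ r → 0 ≤ g r) (hg_mono : MonotoneOn g (Set.Ici 0))
    (hg_subadd : ∀ x y : ℝ, 0 ≤ x → 0 ≤ y → g (x + y) ≤ g x + g y)
    (b : ℝ) (hb : 0 < b)
    (hF_sum : ∀ x : Fin ν → ℤ,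
      Summable (fun y : Fin ν → ℤ => F (dist (latticeEmbed ν x) (latticeEmbed ν y)))) :
    -- (i) `F_{bg}` is non-increasing on `[0,∞)`
    AntitoneOn (fun r => Real.exp (-b * g r) * F r) (Set.Ici 0) ∧
    -- (ii) the lattice sums of `F_{bg}` are summable and dominated by those of `F`
    (∀ x : Fin ν → ℤ,
      Summable (fun y : Fin ν → ℤ =>
        Real.exp (-b * g (dist (latticeEmbed ν x) (latticeEmbed ν y))) *
          F (dist (latticeEmbed ν x) (latticeEmbed ν y))) ∧
      (∑' y : Fin ν → ℤ,
        Real.exp (-b * g (dist (latticeEmbed ν x) (latticeEmbed ν y))) *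
          F (dist (latticeEmbed ν x) (latticeEmbed ν y)))
        ≤ ∑' y : Fin ν → ℤ, F (dist (latticeEmbed ν x) (latticeEmbed ν y))) ∧
    -- (iii) a convolution constant for `F` is a convolution constant for `F_{bg}`
    (∀ C : ℝ, 0 ≤ C →
      (∀ x y : Fin ν → ℤ,
        Summable (fun z : Fin ν → ℤ =>
          F (dist (latticeEmbed ν x) (latticeEmbed ν z)) *
            F (dist (latticeEmbed ν z) (latticeEmbed ν y))) ∧
        (∑' z : Fin ν → ℤ,
          F (dist (latticeEmbed ν x) (latticeEmbed ν z)) *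
            F (dist (latticeEmbed ν z) (latticeEmbed ν y)))
          ≤ C * F (dist (latticeEmbed ν x) (latticeEmbed ν y))) →
      ∀ x y : Fin ν → ℤ,
        Summable (fun z : Fin ν → ℤ =>
          (Real.exp (-b * g (dist (latticeEmbed ν x) (latticeEmbed ν z))) *
            F (dist (latticeEmbed ν x) (latticeEmbed ν z))) *
          (Real.exp (-b * g (dist (latticeEmbed ν z) (latticeEmbed ν y))) *
            F (dist (latticeEmbed ν z) (latticeEmbed ν y)))) ∧
        (∑' z : Fin ν → ℤ,
          (Real.exp (-b * g (dist (latticeEmbed ν x) (latticeEmbed ν z))) *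
            F (dist (latticeEmbed ν x) (latticeEmbed ν z))) *
          (Real.exp (-b * g (dist (latticeEmbed ν z) (latticeEmbed ν y))) *
            F (dist (latticeEmbed ν z) (latticeEmbed ν y))))
          ≤ C * (Real.exp (-b * g (dist (latticeEmbed ν x) (latticeEmbed ν y))) *
              F (dist (latticeEmbed ν x) (latticeEmbed ν y)))) := by
  -- basic facts
  have hexp_le_one : ∀ r : ℝ, 0 ≤ r → Real.exp (-b * g r) ≤ 1 := by
    intro r hr
    apply Real.exp_le_one_iff.mpr
    have := hg_nonneg r hr
    nlinarith
  have hexp_pos : ∀ r : ℝ, 0 < Real.exp (-b * g r) := fun r => Real.exp_pos _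
  refine ⟨?_, ?_, ?_⟩
  · -- (i)
    intro r hr s hs hrs
    have hgr := hg_nonneg r hr
    have hgs := hg_nonneg s hs
    have h1 : Real.exp (-b * g s) ≤ Real.exp (-b * g r) := by
      apply Real.exp_le_exp.mpr
      have := hg_mono hr hs hrs
      nlinarith
    have h2 : F s ≤ F r := hF_anti hr hs hrs
    have hFs : 0 ≤ F s := hF_nonneg s hs
    have her : 0 ≤ Real.exp (-b * g r) := (hexp_pos r).le
    show Real.exp (-b * g s) * F s ≤ Real.exp (-b * g r) * F r
    calc Real.exp (-b * g s) * F s ≤ Real.exp (-b * g r) * F s :=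
          mul_le_mul_of_nonneg_right h1 hFs
      _ ≤ Real.exp (-b * g r) * F r := mul_le_mul_of_nonneg_left h2 her
  · -- (ii)
    intro x
    have hle : ∀ y : Fin ν → ℤ,
        Real.exp (-b * g (dist (latticeEmbed ν x) (latticeEmbed ν y))) *
          F (dist (latticeEmbed ν x) (latticeEmbed ν y))
        ≤ F (dist (latticeEmbed ν x) (latticeEmbed ν y)) := by
      intro y
      have hd : (0:ℝ) ≤ dist (latticeEmbed ν x) (latticeEmbed ν y) := dist_nonneg
      have := hexp_le_one _ hd
      have := hF_nonneg _ hd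
      nlinarith
    have hnn : ∀ y : Fin ν → ℤ,
        0 ≤ Real.exp (-b * g (dist (latticeEmbed ν x) (latticeEmbed ν y))) *
          F (dist (latticeEmbed ν x) (latticeEmbed ν y)) := fun y =>
      mul_nonneg (hexp_pos _).le (hF_nonneg _ dist_nonneg)
    have hsum := (hF_sum x).of_nonneg_of_le hnn hle
    exact ⟨hsum, Summable.tsum_le_tsum hle hsum (hF_sum x)⟩
  · -- (iii)
    intro C hC hconv x y
    set dxy := dist (latticeEmbed ν x) (latticeEmbed ν y) with hdxy
    have hdxy0 : (0:ℝ) ≤ dxy := dist_nonneg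
    have key : ∀ z : Fin ν → ℤ,
        (Real.exp (-b * g (dist (latticeEmbed ν x) (latticeEmbed ν z))) *
          F (dist (latticeEmbed ν x) (latticeEmbed ν z))) *
        (Real.exp (-b * g (dist (latticeEmbed ν z) (latticeEmbed ν y))) *
          F (dist (latticeEmbed ν z) (latticeEmbed ν y)))
        ≤ Real.exp (-b * g dxy) *
          (F (dist (latticeEmbed ν x) (latticeEmbed ν z)) *
            F (dist (latticeEmbed ν z) (latticeEmbed ν y))) := by
      intro z
      set d1 := dist (latticeEmbed ν x) (latticeEmbed ν z) with hd1
      set d2 := dist (latticeEmbed ν z) (latticeEmbed ν y) with hd2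
      have hd10 : (0:ℝ) ≤ d1 := dist_nonneg
      have hd20 : (0:ℝ) ≤ d2 := dist_nonneg
      have htri : dxy ≤ d1 + d2 := dist_triangle _ _ _
      have hg1 : g dxy ≤ g d1 + g d2 := by
        calc g dxy ≤ g (d1 + d2) := hg_mono hdxy0 (add_nonneg hd10 hd20) htri
          _ ≤ g d1 + g d2 := hg_subadd _ _ hd10 hd20
      have hexp : Real.exp (-b * g d1) * Real.exp (-b * g d2) ≤ Real.exp (-b * g dxy) := by
        rw [← Real.exp_add]
        apply Real.exp_le_exp.mpr
        nlinarith
      have hF1 : 0 ≤ F d1 := hF_nonneg _ hd10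
      have hF2 : 0 ≤ F d2 := hF_nonneg _ hd20
      calc (Real.exp (-b * g d1) * F d1) * (Real.exp (-b * g d2) * F d2)
          = (Real.exp (-b * g d1) * Real.exp (-b * g d2)) * (F d1 * F d2) := by ring
        _ ≤ Real.exp (-b * g dxy) * (F d1 * F d2) := by
            apply mul_le_mul_of_nonneg_right hexp (by positivity)
    have hnn : ∀ z : Fin ν → ℤ,
        0 ≤ (Real.exp (-b * g (dist (latticeEmbed ν x) (latticeEmbed ν z))) *
          F (dist (latticeEmbed ν x) (latticeEmbed ν z))) *
        (Real.exp (-b * g (dist (latticeEmbed ν z) (latticeEmbed ν y))) *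
          F (dist (latticeEmbed ν z) (latticeEmbed ν y))) := fun z => by
      have := hF_nonneg _ (dist_nonneg (x := latticeEmbed ν x) (y := latticeEmbed ν z))
      have := hF_nonneg _ (dist_nonneg (x := latticeEmbed ν z) (y := latticeEmbed ν y))
      positivity
    have hsumF := (hconv x y).1
    have hsum : Summable (fun z : Fin ν → ℤ =>
        (Real.exp (-b * g (dist (latticeEmbed ν x) (latticeEmbed ν z))) *
          F (dist (latticeEmbed ν x) (latticeEmbed ν z))) *
        (Real.exp (-b * g (dist (latticeEmbed ν z) (latticeEmbed ν y))) *
          F (dist (latticeEmbed ν z) (latticeEmbed ν y)))) :=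
      (hsumF.mul_left (Real.exp (-b * g dxy))).of_nonneg_of_le hnn key
    refine ⟨hsum, ?_⟩
    calc (∑' z : Fin ν → ℤ,
          (Real.exp (-b * g (dist (latticeEmbed ν x) (latticeEmbed ν z))) *
            F (dist (latticeEmbed ν x) (latticeEmbed ν z))) *
          (Real.exp (-b * g (dist (latticeEmbed ν z) (latticeEmbed ν y))) *
            F (dist (latticeEmbed ν z) (latticeEmbed ν y))))
        ≤ ∑' z : Fin ν → ℤ, Real.exp (-b * g dxy) *
            (F (dist (latticeEmbed ν x) (latticeEmbed ν z)) *
              F (dist (latticeEmbed ν z) (latticeEmbed ν y))) :=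
          Summable.tsum_le_tsum key hsum (hsumF.mul_left _)
      _ = Real.exp (-b * g dxy) * ∑' z : Fin ν → ℤ,
            F (dist (latticeEmbed ν x) (latticeEmbed ν z)) *
              F (dist (latticeEmbed ν z) (latticeEmbed ν y)) := tsum_mul_left
      _ ≤ Real.exp (-b * g dxy) * (C * F dxy) :=
          mul_le_mul_of_nonneg_left (hconv x y).2 (hexp_pos _).le
      _ = C * (Real.exp (-b * g dxy) * F dxy) := by ring

end
end
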